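/- arXiv:2003.03308 — 5 statements merged into one kernel-verified Lean document; each statement's English description precedes it below -/
import Mathlib

section
/- Let A be a nonempty finite type and let P, Q be probability mass functions on A such that P is absolutely continuous with respect to Q (i.e., Q(a) = 0 implies P(a) = 0). Let μ = min{Q(a) : a ∈ A, Q(a) > 0}. Then D(P‖Q) ≤ log(1/μ) · ∑_{a∈A} |P(a) − Q(a)|; equivalently, D(P‖Q) ≤ 2·log(1/μ)·‖P − Q‖₁, where ‖P − Q‖₁ = (1/2)·∑_{a∈A} |P(a) − Q(a)| denotes the total variation distance. [Reverse Pinsker inequality, Lemma 1 of the paper.] -/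
open scoped BigOperators

/-- A probability mass function on a finite type: nonnegative and sums to 1. -/
def IsPMF {A : Type*} [Fintype A] (p : A → ℝ) : Prop :=
  (∀ a, 0 ≤ p a) ∧ ∑ a, p a = 1

/-- Shannon entropy (natural log, with `0 * log 0 = 0` by Lean's conventions). -/
noncomputable def entF {A : Type*} [Fintype A] (p : A → ℝ) : ℝ :=
  -∑ a, p a * Real.log (p a)

/-- Kullback–Leibler divergence (natural log, `0 * log (0/q) = 0` by Lean's conventions). -/
noncomputable def klDivF {A : Type*} [Fintype A] (P Q : A → ℝ) : ℝ :=
  ∑ a, P a * Real.log (P a / Q a)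

/-- Pushforward (law of `f` under `p`), i.e. the marginal / induced distribution. -/
noncomputable def pushF {A B : Type*} [Fintype A] [DecidableEq B] (p : A → ℝ) (f : A → B) :
    B → ℝ :=
  fun b => ∑ a, if f a = b then p a else 0

/-- Mutual information `I(X;Y) = H(X) + H(Y) - H(X,Y)` of a joint PMF on a product type. -/
noncomputable def mutInfoF {A B : Type*} [Fintype A] [Fintype B] [DecidableEq A] [DecidableEq B]
    (p : A × B → ℝ) : ℝ :=
  entF (pushF p Prod.fst) + entF (pushF p Prod.snd) - entF p

/-- Conditional mutual information `I(X;Y|W) = H(X,W) + H(Y,W) - H(X,Y,W) - H(W)` of a joint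
PMF on `X × Y × W`. -/
noncomputable def condMIF {X Y W : Type*} [Fintype X] [Fintype Y] [Fintype W]
    [DecidableEq X] [DecidableEq Y] [DecidableEq W] (p : X × Y × W → ℝ) : ℝ :=
  entF (pushF p (fun t => (t.1, t.2.2))) + entF (pushF p (fun t => (t.2.1, t.2.2)))
    - entF p - entF (pushF p (fun t => t.2.2))

/-- Binary entropy function (natural log). -/
noncomputable def binEnt (t : ℝ) : ℝ :=
  -(t * Real.log t) - (1 - t) * Real.log (1 - t)

/-- The Bernoulli(t) PMF on `ZMod 2`, assigning probability `t` to `1`. -/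
noncomputable def bern (t : ℝ) : ZMod 2 → ℝ := fun x => if x = 1 then t else 1 - t


private lemma rp_chord_log {μ q : ℝ} (hμ0 : 0 < μ) (hμ1 : μ < 1) (hq1 : μ ≤ q) (hq2 : q ≤ 1) :
    (1 - q) / (1 - μ) * Real.log μ ≤ Real.log q := by
  have h1μ : (0:ℝ) < 1 - μ := by linarith
  have ha : (0:ℝ) ≤ (1 - q) / (1 - μ) := by apply div_nonneg <;> linarith
  have hb : (0:ℝ) ≤ (q - μ) / (1 - μ) := by apply div_nonneg <;> linarith
  have hab : (1 - q) / (1 - μ) + (q - μ) / (1 - μ) = 1 := by field_simp; ring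
  have h := strictConcaveOn_log_Ioi.concaveOn.2 (Set.mem_Ioi.2 hμ0) (Set.mem_Ioi.2 one_pos)
    ha hb hab
  simp only [smul_eq_mul] at h
  have hxy : (1 - q) / (1 - μ) * μ + (q - μ) / (1 - μ) * 1 = q := by
    field_simp
    ring
  rw [hxy, Real.log_one] at h
  linarith

private lemma rp_claimA {μ q p : ℝ} (hμ0 : 0 < μ) (hμ2 : μ ≤ 1/2) (hq1 : μ ≤ q) (hq2 : q ≤ 1)
    (hp1 : q ≤ p) (hp2 : p ≤ 1) :
    p * Real.log (p / q) ≤ 2 * Real.log (1/μ) * (p - q) := by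
  have hq0 : 0 < q := lt_of_lt_of_le hμ0 hq1
  have hp0 : 0 < p := lt_of_lt_of_le hq0 hp1
  have hμ1 : μ < 1 := by linarith
  have hL : Real.log (1/μ) = -Real.log μ := by rw [one_div, Real.log_inv]
  have hphi : -Real.log q ≤ 2 * (-Real.log μ) * (1 - q) := by
    have hch := rp_chord_log hμ0 hμ1 hq1 hq2
    have h1μ : (0:ℝ) < 1 - μ := by linarith
    have hch' : (1 - q) * Real.log μ ≤ (1 - μ) * Real.log q := by
      rw [div_mul_eq_mul_div, div_le_iff₀ h1μ] at hch
      linarith [hch]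
    have hlogμ : Real.log μ ≤ 0 := Real.log_nonpos hμ0.le hμ1.le
    nlinarith [mul_nonneg (by linarith : (0:ℝ) ≤ 1 - q) (by linarith : (0:ℝ) ≤ -Real.log μ),
      mul_nonneg (mul_nonneg (by linarith : (0:ℝ) ≤ 1 - q) (by linarith : (0:ℝ) ≤ -Real.log μ))
        (by linarith : (0:ℝ) ≤ 1 - 2*μ)]
  rw [Real.log_div hp0.ne' hq0.ne', hL]
  rcases eq_or_lt_of_le hq2 with hq2' | hq2'
  · have hp' : p = 1 := le_antisymm hp2 (hq2' ▸ hp1)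
    simp [← hq2', hp']
  · have h1q : (0:ℝ) < 1 - q := by linarith
    have ha : (0:ℝ) ≤ (1 - p) / (1 - q) := by apply div_nonneg <;> linarith
    have hb : (0:ℝ) ≤ (p - q) / (1 - q) := by apply div_nonneg <;> linarith
    have hab : (1 - p) / (1 - q) + (p - q) / (1 - q) = 1 := by field_simp; ring
    have hconv := Real.convexOn_mul_log.2 (Set.mem_Ici.2 hq0.le) (Set.mem_Ici.2 zero_le_one)
      ha hb hab
    simp only [smul_eq_mul] at hconv
    have hxy : (1 - p) / (1 - q) * q + (p - q) / (1 - q) * 1 = p := by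
      field_simp
      ring
    rw [hxy, Real.log_one, mul_zero, mul_zero, add_zero] at hconv
    -- hconv : p * log p ≤ (1-p)/(1-q) * (q * log q)
    have hkey : (1 - q) * (p * Real.log p) ≤ (1 - p) * (q * Real.log q) := by
      rw [div_mul_eq_mul_div] at hconv
      calc (1 - q) * (p * Real.log p)
          ≤ (1 - q) * ((1 - p) * (q * Real.log q) / (1 - q)) :=
            mul_le_mul_of_nonneg_left hconv h1q.le
        _ = (1 - p) * (q * Real.log q) := by field_simp
    have hpq : (0:ℝ) ≤ p - q := by linarith
    have h2 : (p - q) * (-Real.log q) ≤ (p - q) * (2 * (-Real.log μ) * (1 - q)) :=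
      mul_le_mul_of_nonneg_left hphi hpq
    rw [← mul_le_mul_iff_right₀ h1q]
    nlinarith [hkey, h2]

/-- **Reverse Pinsker inequality** (Lemma 1): for PMFs `P, Q` on a nonempty finite type with
`P` absolutely continuous w.r.t. `Q`, and `μ` the minimum positive value of `Q`,
`D(P‖Q) ≤ log(1/μ) · ∑_a |P a − Q a|`. -/
theorem reverse_pinsker {A : Type*} [Fintype A] [Nonempty A]
    (P Q : A → ℝ) (hP : IsPMF P) (hQ : IsPMF Q)
    (hAC : ∀ a, Q a = 0 → P a = 0)
    (μ : ℝ) (hμ : IsLeast {x : ℝ | ∃ a, 0 < Q a ∧ Q a = x} μ) :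
    klDivF P Q ≤ Real.log (1 / μ) * ∑ a, |P a - Q a| := by
  classical
  obtain ⟨⟨a₀, ha₀pos, ha₀eq⟩, hlb⟩ := hμ
  have hμ0 : 0 < μ := ha₀eq ▸ ha₀pos
  have hP1 : ∀ a, P a ≤ 1 := fun a => by
    rw [← hP.2]
    exact Finset.single_le_sum (fun b _ => hP.1 b) (Finset.mem_univ a)
  have hQ1 : ∀ a, Q a ≤ 1 := fun a => by
    rw [← hQ.2]
    exact Finset.single_le_sum (fun b _ => hQ.1 b) (Finset.mem_univ a)
  have hμle : ∀ a, 0 < Q a → μ ≤ Q a := fun a ha => hlb ⟨a, ha, rfl⟩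
  by_cases hhalf : μ ≤ 1/2
  · -- main case
    have hpt : ∀ a, P a * Real.log (P a / Q a) ≤
        2 * Real.log (1/μ) * max (P a - Q a) 0 := by
      intro a
      rcases le_or_gt (P a) (Q a) with hle | hlt
      · rw [max_eq_right (by linarith)]
        rcases eq_or_lt_of_le (hP.1 a) with h0 | h0
        · simp [← h0]
        · have hQa : 0 < Q a := lt_of_lt_of_le h0 hle
          have : Real.log (P a / Q a) ≤ 0 :=
            Real.log_nonpos (by positivity) ((div_le_one hQa).2 hle)
          have := mul_nonpos_of_nonneg_of_nonpos (hP.1 a) this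
          linarith
      · have hQa : 0 < Q a := by
          rcases eq_or_lt_of_le (hQ.1 a) with h0 | h0
          · exact absurd (hAC a h0.symm) (by rw [← h0] at hlt; linarith)
          · exact h0
        rw [max_eq_left (by linarith)]
        exact rp_claimA hμ0 hhalf (hμle a hQa) (hQ1 a) hlt.le (hP1 a)
    have hsum0 : ∑ a, (P a - Q a) = 0 := by
      rw [Finset.sum_sub_distrib, hP.2, hQ.2]; ring
    have habs : ∑ a, |P a - Q a| = ∑ a, (2 * max (P a - Q a) 0 - (P a - Q a)) := by
      apply Finset.sum_congr rfl
      intro a _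
      rcases le_total (P a - Q a) 0 with h | h
      · rw [max_eq_right h, abs_of_nonpos h]; ring
      · rw [max_eq_left h, abs_of_nonneg h]; ring
    calc klDivF P Q ≤ ∑ a, 2 * Real.log (1/μ) * max (P a - Q a) 0 :=
          Finset.sum_le_sum (fun a _ => hpt a)
      _ = Real.log (1/μ) * ∑ a, |P a - Q a| := by
          rw [← Finset.mul_sum, habs, Finset.sum_sub_distrib, hsum0, ← Finset.mul_sum]
          ring
  · -- μ > 1/2 : Q is a point mass and P = Q
    push_neg at hhalf
    have hzero : ∀ b, b ≠ a₀ → Q b = 0 := by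
      intro b hb
      by_contra hQb
      have hQb' : 0 < Q b := lt_of_le_of_ne (hQ.1 b) (Ne.symm hQb)
      have h1 : Q a₀ + Q b ≤ 1 := by
        rw [← hQ.2]
        have := Finset.sum_le_sum_of_subset_of_nonneg
          (Finset.subset_univ ({a₀, b} : Finset A)) (fun c _ _ => hQ.1 c)
        rwa [Finset.sum_pair hb.symm] at this
      have := hμle b hQb'
      rw [ha₀eq] at h1
      linarith
    have hPQ : ∀ a, P a = Q a := by
      have hQa₀ : Q a₀ = 1 := by
        rw [← hQ.2, Finset.sum_eq_single a₀ (fun b _ hb => hzero b hb) (fun h => absurd (Finset.mem_univ a₀) h)]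
      have hPa₀ : P a₀ = 1 := by
        rw [← hP.2, Finset.sum_eq_single a₀ (fun b _ hb => hAC b (hzero b hb)) (fun h => absurd (Finset.mem_univ a₀) h)]
      intro a
      by_cases ha : a = a₀
      · rw [ha, hQa₀, hPa₀]
      · rw [hzero a ha, hAC a (hzero a ha)]
    have hD : klDivF P Q = 0 := by
      unfold klDivF
      apply Finset.sum_eq_zero
      intro a _
      rw [hPQ a]
      rcases eq_or_lt_of_le (hQ.1 a) with h0 | h0
      · rw [← h0]; ring
      · rw [div_self h0.ne', Real.log_one, mul_zero]
    have hR : ∑ a, |P a - Q a| = 0 := by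
      apply Finset.sum_eq_zero
      intro a _
      rw [hPQ a, sub_self, abs_zero]
    rw [hD, hR, mul_zero]
end

section
/- Let Z be a nonempty finite type, n ≥ 1, let p be a PMF on Fin n → Z (the joint law of Z₁,…,Zₙ), let Q₀ be a PMF on Z with Q₀(z) > 0 for all z, and let δ ≥ 0. If D(p ‖ Q₀^{⊗n}) ≤ δ, where Q₀^{⊗n}(z₁,…,zₙ) = ∏_{i=1}^n Q₀(zᵢ), then ∑_{i=1}^{n} I(Zᵢ ; (Z_{i+1},…,Zₙ)) ≤ δ, where the mutual informations are computed from the corresponding marginals of p and the i = n term is interpreted as 0. [Lemma 2 of the paper, second claim.] -/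
open scoped BigOperators

lemma pushF_apply_sum {A B : Type*} [Fintype A] [Fintype B] [DecidableEq B]
    (p : A → ℝ) (g : A → B) (φ : B → ℝ) :
    ∑ b, pushF p g b * φ b = ∑ a, p a * φ (g a) := by
  simp only [pushF, Finset.sum_mul, ite_mul, zero_mul]
  rw [Finset.sum_comm]
  refine Finset.sum_congr rfl fun a _ => ?_
  simp

lemma pushF_comp {A B C : Type*} [Fintype A] [Fintype B] [DecidableEq B] [DecidableEq C]
    (p : A → ℝ) (g : A → B) (h : B → C) :
    pushF (pushF p g) h = pushF p (fun a => h (g a)) := by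
  funext c
  simp only [pushF]
  rw [Finset.sum_congr rfl (fun b _ => show
      (if h b = c then ∑ a, if g a = b then p a else 0 else 0)
      = ∑ a, (if g a = b then (if h b = c then p a else 0) else 0) by
    split_ifs with hb <;> simp)]
  rw [Finset.sum_comm]
  refine Finset.sum_congr rfl fun a _ => ?_
  simp

lemma sum_F_pushF {A B : Type*} [Fintype A] [Fintype B] [DecidableEq B]
    (p : A → ℝ) (g : A → B) (hg : Function.Injective g) (F : ℝ → ℝ) (hF : F 0 = 0) :
    ∑ b, F (pushF p g b) = ∑ a, F (p a) := by
  have h1 : ∀ a, pushF p g (g a) = p a := by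
    intro a
    unfold pushF
    rw [Finset.sum_eq_single_of_mem a (Finset.mem_univ a)]
    · simp
    · intro b _ hb
      exact if_neg (fun hc => hb (hg hc))
  have h0 : ∀ b, b ∉ Finset.univ.image g → F (pushF p g b) = 0 := by
    intro b hb
    have : pushF p g b = 0 := by
      apply Finset.sum_eq_zero
      intro a _
      rw [if_neg]
      intro hc
      exact hb (Finset.mem_image.2 ⟨a, Finset.mem_univ a, hc⟩)
    rw [this, hF]
  rw [← Finset.sum_subset (Finset.subset_univ (Finset.univ.image g)) (fun b _ hb => h0 b hb)]
  rw [Finset.sum_image (fun x _ y _ hxy => hg hxy)]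
  simp [h1]

lemma isPMF_pushF {A B : Type*} [Fintype A] [Fintype B] [DecidableEq B]
    (p : A → ℝ) (hp : IsPMF p) (g : A → B) : IsPMF (pushF p g) := by
  constructor
  · intro b
    apply Finset.sum_nonneg
    intro a _
    split_ifs
    · exact hp.1 a
    · exact le_refl 0
  · have := pushF_apply_sum p g (fun _ => 1)
    simpa [hp.2] using this

lemma entF_pushF_of_injective {A B : Type*} [Fintype A] [Fintype B] [DecidableEq B]
    (p : A → ℝ) (g : A → B) (hg : Function.Injective g) :
    entF (pushF p g) = entF p := by
  unfold entF
  rw [sum_F_pushF p g hg (fun x => x * Real.log x) (by simp)]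

lemma klDivF_nonneg {A : Type*} [Fintype A] (P Q : A → ℝ) (hP : IsPMF P) (hQ : IsPMF Q)
    (hQpos : ∀ a, 0 < Q a) : 0 ≤ klDivF P Q := by
  have key : ∑ a, P a * Real.log (Q a / P a) ≤ 0 := by
    calc ∑ a, P a * Real.log (Q a / P a) ≤ ∑ a, (Q a - P a) := by
          apply Finset.sum_le_sum
          intro a _
          rcases eq_or_lt_of_le (hP.1 a) with h0 | hpos
          · rw [← h0]; simpa using (hQpos a).le
          · calc P a * Real.log (Q a / P a) ≤ P a * (Q a / P a - 1) :=
                  mul_le_mul_of_nonneg_left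
                    (Real.log_le_sub_one_of_pos (div_pos (hQpos a) hpos)) hpos.le
              _ = Q a - P a := by field_simp
      _ = 0 := by rw [Finset.sum_sub_distrib, hP.2, hQ.2, sub_self]
  have heq : klDivF P Q = - ∑ a, P a * Real.log (Q a / P a) := by
    unfold klDivF
    rw [← Finset.sum_neg_distrib]
    refine Finset.sum_congr rfl fun a _ => ?_
    rw [show P a / Q a = (Q a / P a)⁻¹ from (inv_div _ _).symm, Real.log_inv]
    ring
  rw [heq]
  linarith

/-- `D(P‖Q) = -H(P) - ∑ P log Q` when `Q > 0`. -/
lemma klDivF_eq {A : Type*} [Fintype A] (P Q : A → ℝ)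
    (hQpos : ∀ a, 0 < Q a) :
    klDivF P Q = - entF P - ∑ a, P a * Real.log (Q a) := by
  unfold klDivF entF
  rw [neg_neg, ← Finset.sum_sub_distrib]
  refine Finset.sum_congr rfl fun a _ => ?_
  rcases eq_or_ne (P a) 0 with h0 | h0
  · simp [h0]
  · rw [Real.log_div h0 (hQpos a).ne', mul_sub]

lemma entF_pushF_relabel {A B C : Type*} [Fintype A] [Fintype B] [Fintype C]
    [DecidableEq B] [DecidableEq C]
    (p : A → ℝ) (g : A → B) (σ : B → C) (hσ : Function.Injective σ) :
    entF (pushF p (fun a => σ (g a))) = entF (pushF p g) := by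
  rw [← pushF_comp, entF_pushF_of_injective _ _ hσ]

/-- Lemma 2, second claim: if `D(p ‖ Q₀^{⊗n}) ≤ δ` then
`∑_{i=1}^n I(Zᵢ ; (Z_{i+1},…,Zₙ)) ≤ δ`. -/
theorem sum_mutInfo_future_le {Z : Type*} [Fintype Z] [Nonempty Z] [DecidableEq Z]
    (n : ℕ) (hn : 1 ≤ n)
    (p : (Fin n → Z) → ℝ) (hp : IsPMF p)
    (Q₀ : Z → ℝ) (hQ₀ : IsPMF Q₀) (hQ₀pos : ∀ z, 0 < Q₀ z)
    (δ : ℝ) (hδ : 0 ≤ δ)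
    (h : klDivF p (fun f => ∏ i, Q₀ (f i)) ≤ δ) :
    ∑ i : Fin n,
        mutInfoF (pushF p (fun f => (f i, fun j : {j : Fin n // i < j} => f j.1))) ≤ δ := by
  classical
  set marg : Fin n → Z → ℝ := fun i => pushF p (fun f => f i) with hmarg
  have hQnpos : ∀ f : Fin n → Z, 0 < ∏ i, Q₀ (f i) :=
    fun f => Finset.prod_pos (fun i _ => hQ₀pos (f i))
  have hkl1 : klDivF p (fun f => ∏ i, Q₀ (f i))
      = - entF p - ∑ f, p f * Real.log (∏ i, Q₀ (f i)) := klDivF_eq p _ hQnpos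
  have hlogprod : ∑ f, p f * Real.log (∏ i, Q₀ (f i))
      = ∑ i : Fin n, ∑ z, marg i z * Real.log (Q₀ z) := by
    have hlp : ∀ f : Fin n → Z, Real.log (∏ i, Q₀ (f i)) = ∑ i, Real.log (Q₀ (f i)) :=
      fun f => Real.log_prod (fun i _ => (hQ₀pos (f i)).ne')
    simp_rw [hlp, Finset.mul_sum]
    rw [Finset.sum_comm]
    exact Finset.sum_congr rfl fun i _ =>
      (pushF_apply_sum p (fun f => f i) (fun z => Real.log (Q₀ z))).symm
  have hmargPMF : ∀ i, IsPMF (marg i) := fun i => isPMF_pushF p hp _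
  have hkl2 : ∀ i : Fin n, ∑ z, marg i z * Real.log (Q₀ z)
      = - entF (marg i) - klDivF (marg i) Q₀ := by
    intro i
    have := klDivF_eq (marg i) Q₀ hQ₀pos
    linarith
  have hmain : ∑ i, entF (marg i) - entF p ≤ δ := by
    have h1 : klDivF p (fun f => ∏ i, Q₀ (f i))
        = - entF p + ∑ i, (entF (marg i) + klDivF (marg i) Q₀) := by
      rw [hkl1, hlogprod, Finset.sum_congr rfl (fun i _ => hkl2 i),
        show (∑ i, (- entF (marg i) - klDivF (marg i) Q₀))
            = - ∑ i, (entF (marg i) + klDivF (marg i) Q₀) by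
          rw [← Finset.sum_neg_distrib]
          exact Finset.sum_congr rfl fun i _ => by ring]
      ring
    have h2 : ∑ i, entF (marg i) ≤ ∑ i, (entF (marg i) + klDivF (marg i) Q₀) :=
      Finset.sum_le_sum fun i _ => le_add_of_nonneg_right
        (klDivF_nonneg _ _ (hmargPMF i) hQ₀ hQ₀pos)
    linarith [h1 ▸ h]
  -- entropy bookkeeping
  set Tn : ℕ → ℝ := fun k =>
    entF (pushF p (fun f => fun j : {j : Fin n // k ≤ j.1} => f j.1)) with hTn
  have hterm : ∀ i : Fin n,
      mutInfoF (pushF p (fun f => (f i, fun j : {j : Fin n // i < j} => f j.1)))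
        = entF (marg i) + (Tn (i.1 + 1) - Tn i.1) := by
    intro i
    set g : (Fin n → Z) → Z × ({j : Fin n // i < j} → Z) :=
      fun f => (f i, fun j => f j.1) with hg
    have hfst : entF (pushF (pushF p g) Prod.fst) = entF (marg i) := by
      rw [pushF_comp]
    have hsnd : entF (pushF (pushF p g) Prod.snd) = Tn (i.1 + 1) := by
      rw [pushF_comp]
      set σ : ({j : Fin n // i < j} → Z) → ({j : Fin n // i.1 + 1 ≤ j.1} → Z) :=
        fun h j => h ⟨j.1, by have := j.2; rw [Fin.lt_def]; omega⟩ with hσ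
      have hσinj : Function.Injective σ := by
        intro h h' he
        funext k
        have hk : i.1 + 1 ≤ k.1.1 := by have := k.2; rw [Fin.lt_def] at this; omega
        exact congrFun he ⟨k.1, hk⟩
      have hcomp : (fun f : Fin n → Z => fun j : {j : Fin n // i.1 + 1 ≤ j.1} => f j.1)
          = fun f : Fin n → Z =>
              σ (fun j : {j : Fin n // i < j} => f j.1) := rfl
      show entF (pushF p (fun f : Fin n → Z => fun j : {j : Fin n // i.1 + 1 ≤ j.1} => f j.1))
          = entF (pushF p (fun f : Fin n → Z => fun j : {j : Fin n // i < j} => f j.1))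
      rw [hcomp]
      exact entF_pushF_relabel p
        (fun f' : Fin n → Z => fun j : {j : Fin n // i < j} => f' j.1) σ hσinj
    have hjoint : entF (pushF p g) = Tn i.1 := by
      set τ : Z × ({j : Fin n // i < j} → Z) → ({j : Fin n // i.1 ≤ j.1} → Z) :=
        fun zh j => if hj : i < j.1 then zh.2 ⟨j.1, hj⟩ else zh.1 with hτ
      have hτinj : Function.Injective τ := by
        intro zh zh' he
        have h1 : zh.1 = zh'.1 := by
          have := congrFun he ⟨i, le_refl i.1⟩
          simpa [hτ, lt_irrefl] using this
        have h2 : zh.2 = zh'.2 := by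
          funext k
          have hk : i.1 ≤ k.1.1 := by have := k.2; rw [Fin.lt_def] at this; omega
          have := congrFun he ⟨k.1, hk⟩
          simpa [hτ, k.2] using this
        exact Prod.ext h1 h2
      have hτg : (fun f => τ (g f)) = (fun f => fun j : {j : Fin n // i.1 ≤ j.1} => f j.1) := by
        funext f j
        by_cases hj : i < j.1
        · simp [hτ, hg, hj]
        · have hji : j.1 = i := by
            apply Fin.ext
            rw [Fin.lt_def] at hj
            have := j.2
            omega
          simp [hτ, hg, hj, hji]
      calc entF (pushF p g) = entF (pushF p (fun f => τ (g f))) :=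
            (entF_pushF_relabel p g τ hτinj).symm
        _ = Tn i.1 := by rw [hτg, hTn]
    unfold mutInfoF
    rw [hfst, hsnd, hjoint]
    ring
  rw [Finset.sum_congr rfl (fun i _ => hterm i), Finset.sum_add_distrib]
  have htel : ∑ i : Fin n, (Tn (i.1 + 1) - Tn i.1) = Tn n - Tn 0 := by
    rw [Fin.sum_univ_eq_sum_range (fun k => Tn (k + 1) - Tn k) n]
    exact Finset.sum_range_sub Tn n
  have hT0 : Tn 0 = entF p := by
    rw [hTn]
    apply entF_pushF_of_injective
    intro f f' he
    funext j
    exact congrFun he ⟨j, Nat.zero_le _⟩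
  have hTnn : Tn n = 0 := by
    rw [hTn]
    have hb : ∀ b, pushF p (fun f => fun j : {j : Fin n // n ≤ j.1} => f j.1) b = 1 := by
      intro b
      have hab : ∀ a : Fin n → Z, (fun j : {j : Fin n // n ≤ j.1} => a j.1) = b := by
        intro a
        funext j
        exact absurd j.2 (Nat.not_le.2 j.1.isLt)
      unfold pushF
      simp [hab, hp.2]
    show entF (pushF p (fun f : Fin n → Z => fun j : {j : Fin n // n ≤ j.1} => f j.1)) = 0
    unfold entF
    simp [hb]
  rw [htel, hTnn, hT0]
  linarith
end

section
/- Let ζ ∈ (0, 1/2). For every α ∈ (0, ζ), define F(α) = −α·log(α/ζ) − (1+α−2ζ)·log((1+α−2ζ)/(1−ζ)) − (ζ−α)·log((ζ−α)/ζ) − (ζ−α)·log((ζ−α)/(1−ζ)), where all logarithms are natural (note that 1+α−2ζ > 0 since ζ < 1/2). Then F(α) ≤ h(ζ) for all α ∈ (0, ζ), with equality if and only if α = ζ². [Equations (40)–(41) in the proof of Proposition 1 of the paper.] -/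
open scoped BigOperators

/-- The objective function of equations (40)–(41). -/
noncomputable def Fobj (ζ α : ℝ) : ℝ :=
  -(α * Real.log (α / ζ))
    - (1 + α - 2 * ζ) * Real.log ((1 + α - 2 * ζ) / (1 - ζ))
    - (ζ - α) * Real.log ((ζ - α) / ζ)
    - (ζ - α) * Real.log ((ζ - α) / (1 - ζ))


lemma klterm {p q : ℝ} (hp : 0 < p) (hq : 0 < q) : p - q ≤ p * Real.log (p / q) := by
  have h := Real.log_le_sub_one_of_pos (div_pos hq hp)
  have hflip : Real.log (q / p) = - Real.log (p / q) := by
    rw [← Real.log_inv, inv_div]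
  rw [hflip] at h
  have h2 : p * -Real.log (p / q) ≤ p * (q / p - 1) := mul_le_mul_of_nonneg_left h hp.le
  have h3 : p * (q / p - 1) = q - p := by field_simp
  nlinarith [h2, h3]

lemma klterm_strict {p q : ℝ} (hp : 0 < p) (hq : 0 < q) (hne : p ≠ q) :
    p - q < p * Real.log (p / q) := by
  have hne' : q / p ≠ 1 := by
    rw [Ne, div_eq_one_iff_eq hp.ne']
    exact fun h => hne h.symm
  have h := Real.log_lt_sub_one_of_pos (div_pos hq hp) hne'
  have hflip : Real.log (q / p) = - Real.log (p / q) := by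
    rw [← Real.log_inv, inv_div]
  rw [hflip] at h
  have h2 : p * -Real.log (p / q) < p * (q / p - 1) := (mul_lt_mul_iff_right₀ hp).2 h
  have h3 : p * (q / p - 1) = q - p := by field_simp
  nlinarith [h2, h3]

lemma key (ζ α : ℝ) (hζ0 : 0 < ζ) (hζ : ζ < 1 / 2)
    (hα0 : 0 < α) (hαζ : α < ζ) :
    binEnt ζ - Fobj ζ α =
      α * Real.log (α / (ζ * ζ))
      + (ζ - α) * Real.log ((ζ - α) / (ζ * (1 - ζ)))
      + (ζ - α) * Real.log ((ζ - α) / (ζ * (1 - ζ)))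
      + (1 + α - 2 * ζ) * Real.log ((1 + α - 2 * ζ) / ((1 - ζ) * (1 - ζ))) := by
  have h1 : (0:ℝ) < 1 - ζ := by linarith
  have hc : (0:ℝ) < ζ - α := by linarith
  have hb : (0:ℝ) < 1 + α - 2 * ζ := by linarith
  rw [binEnt, Fobj,
    Real.log_div hα0.ne' hζ0.ne', Real.log_div hb.ne' h1.ne',
    Real.log_div hc.ne' hζ0.ne', Real.log_div hc.ne' h1.ne',
    Real.log_div hα0.ne' (by positivity), Real.log_div hc.ne' (by positivity),
    Real.log_div hb.ne' (by positivity),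
    Real.log_mul hζ0.ne' hζ0.ne', Real.log_mul hζ0.ne' h1.ne',
    Real.log_mul h1.ne' h1.ne']
  ring


/-- Equations (40)–(41) in the proof of Proposition 1: for `ζ ∈ (0,1/2)` and `α ∈ (0,ζ)`,
`F(α) ≤ h(ζ)`, with equality iff `α = ζ²`. -/
theorem Fobj_le_binEnt (ζ : ℝ) (hζ0 : 0 < ζ) (hζ : ζ < 1 / 2)
    (α : ℝ) (hα0 : 0 < α) (hαζ : α < ζ) :
    Fobj ζ α ≤ binEnt ζ ∧ (Fobj ζ α = binEnt ζ ↔ α = ζ ^ 2) := by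
  have h1 : (0:ℝ) < 1 - ζ := by linarith
  have hc : (0:ℝ) < ζ - α := by linarith
  have hb : (0:ℝ) < 1 + α - 2 * ζ := by linarith
  have hk := key ζ α hζ0 hζ hα0 hαζ
  have t2 : (ζ - α) - ζ * (1 - ζ) ≤ (ζ - α) * Real.log ((ζ - α) / (ζ * (1 - ζ))) :=
    klterm hc (by positivity)
  have t4 : (1 + α - 2 * ζ) - (1 - ζ) * (1 - ζ) ≤
      (1 + α - 2 * ζ) * Real.log ((1 + α - 2 * ζ) / ((1 - ζ) * (1 - ζ))) :=
    klterm hb (by positivity)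
  constructor
  · have t1 : α - ζ * ζ ≤ α * Real.log (α / (ζ * ζ)) := klterm hα0 (by positivity)
    nlinarith [t1, t2, t4, hk]
  · constructor
    · intro heq
      by_contra hne
      have t1 : α - ζ * ζ < α * Real.log (α / (ζ * ζ)) :=
        klterm_strict hα0 (by positivity) (by
          intro h; exact hne (by rw [h]; ring))
      nlinarith [t1, t2, t4, hk, heq]
    · intro heq
      have e1 : α / (ζ * ζ) = 1 := by rw [heq]; field_simp
      have e2 : (ζ - α) / (ζ * (1 - ζ)) = 1 := by
        rw [heq]; field_simp
      have e3 : (1 + α - 2 * ζ) / ((1 - ζ) * (1 - ζ)) = 1 := by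
        rw [heq]; field_simp; ring
      rw [e1, e2, e3, Real.log_one] at hk
      linarith [hk]
end

section
/- Let q be a PMF on {0,1} × {0,1} (the law of a pair (S₁,S₂)) and set p₁₀ = q(1,0). (i) For every joint PMF p on {0,1}³ (the joint law of (X,S₁,S₂)) whose (S₁,S₂)-marginal equals q and which satisfies p(x,s₁,1) = 0 whenever x = 1 (i.e., X·S₂ = 0 with probability one), the conditional mutual information I(X ; X·S₁ | (S₁,S₂)), computed from the induced joint law of (X, X·S₁, S₁, S₂) where X·S₁ denotes the product in {0,1}, satisfies I(X ; X·S₁ | (S₁,S₂)) ≤ p₁₀ · log 2. (ii) There exists such a joint PMF p achieving I(X ; X·S₁ | (S₁,S₂)) = p₁₀ · log 2. [Proposition 2 of the paper: covert capacity of the binary multiplicative-state channel equals p_{1,0} bits.] -/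
open scoped BigOperators

/-- Proposition 2 (covert capacity of the binary multiplicative-state channel): with
`q` the law of `(S₁,S₂)` and `p₁₀ = q(1,0)`,
(i) every joint law `p` of `(X,S₁,S₂)` with `(S₁,S₂)`-marginal `q` and `X·S₂ = 0` a.s.
satisfies `I(X ; X·S₁ | (S₁,S₂)) ≤ p₁₀·log 2`, and
(ii) some such `p` achieves `I(X ; X·S₁ | (S₁,S₂)) = p₁₀·log 2`. -/

private lemma sum_zmod2' (f : ZMod 2 → ℝ) : ∑ x, f x = f 0 + f 1 := by
  have h : (Finset.univ : Finset (ZMod 2)) = {0, 1} := by decide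
  rw [h, Finset.sum_insert (by decide), Finset.sum_singleton]

private lemma condMIF_push_eval (p : ZMod 2 × ZMod 2 × ZMod 2 → ℝ) :
    condMIF (pushF p (fun t => (t.1, t.1 * t.2.1, (t.2.1, t.2.2)))) =
    ((p (0,1,0) + p (1,1,0)) * Real.log (p (0,1,0) + p (1,1,0))
      - p (0,1,0) * Real.log (p (0,1,0)) - p (1,1,0) * Real.log (p (1,1,0)))
    + ((p (0,1,1) + p (1,1,1)) * Real.log (p (0,1,1) + p (1,1,1))
      - p (0,1,1) * Real.log (p (0,1,1)) - p (1,1,1) * Real.log (p (1,1,1))) := by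
  simp only [condMIF, entF, pushF, Fintype.sum_prod_type, sum_zmod2', Prod.mk.injEq]
  norm_num
  ring_nf

private lemma merge_le' (u v : ℝ) (hu : 0 ≤ u) (hv : 0 ≤ v) :
    (u + v) * Real.log (u + v) - u * Real.log u - v * Real.log v
      ≤ (u + v) * Real.log 2 := by
  rcases eq_or_lt_of_le hu with h0 | hu'
  · rw [← h0]
    simp only [zero_add, Real.log_zero, mul_zero, sub_zero, zero_mul]
    nlinarith [Real.log_pos (by norm_num : (1:ℝ) < 2), hv]
  rcases eq_or_lt_of_le hv with h1 | hv'
  · rw [← h1]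
    simp only [add_zero, Real.log_zero, mul_zero, sub_zero, zero_mul]
    nlinarith [Real.log_pos (by norm_num : (1:ℝ) < 2), hu]
  · have h1 : Real.log ((u+v)/(2*u)) ≤ (u+v)/(2*u) - 1 :=
      Real.log_le_sub_one_of_pos (by positivity)
    have h2 : Real.log ((u+v)/(2*v)) ≤ (u+v)/(2*v) - 1 :=
      Real.log_le_sub_one_of_pos (by positivity)
    have e1 : Real.log ((u+v)/(2*u)) = Real.log (u+v) - Real.log 2 - Real.log u := by
      rw [Real.log_div (by positivity) (by positivity),
        Real.log_mul (by norm_num) (by positivity)]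
      ring
    have e2 : Real.log ((u+v)/(2*v)) = Real.log (u+v) - Real.log 2 - Real.log v := by
      rw [Real.log_div (by positivity) (by positivity),
        Real.log_mul (by norm_num) (by positivity)]
      ring
    rw [e1] at h1; rw [e2] at h2
    have h1' := mul_le_mul_of_nonneg_left h1 hu
    have h2' := mul_le_mul_of_nonneg_left h2 hv
    have d1 : u * ((u+v)/(2*u) - 1) = (u+v)/2 - u := by field_simp
    have d2 : v * ((u+v)/(2*v) - 1) = (u+v)/2 - v := by field_simp
    rw [d1] at h1'; rw [d2] at h2'
    nlinarith

private lemma merge_eq' (u : ℝ) (hu : 0 ≤ u) :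
    (u + u) * Real.log (u + u) - u * Real.log u - u * Real.log u
      = (u + u) * Real.log 2 := by
  rcases eq_or_lt_of_le hu with h0 | hu'
  · rw [← h0]; simp
  · have h2u : u + u = 2 * u := by ring
    rw [h2u, Real.log_mul (by norm_num) (by positivity)]
    ring

/-- Proposition 2. -/
theorem covert_capacity_binary_multiplicative
    (q : ZMod 2 × ZMod 2 → ℝ) (hq : IsPMF q) :
    (∀ p : ZMod 2 × ZMod 2 × ZMod 2 → ℝ, IsPMF p →
        pushF p (fun t => (t.2.1, t.2.2)) = q →
        (∀ s₁ : ZMod 2, p (1, s₁, 1) = 0) →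
        condMIF (pushF p (fun t => (t.1, t.1 * t.2.1, (t.2.1, t.2.2))))
          ≤ q (1, 0) * Real.log 2)
      ∧ (∃ p : ZMod 2 × ZMod 2 × ZMod 2 → ℝ, IsPMF p ∧
          pushF p (fun t => (t.2.1, t.2.2)) = q ∧
          (∀ s₁ : ZMod 2, p (1, s₁, 1) = 0) ∧
          condMIF (pushF p (fun t => (t.1, t.1 * t.2.1, (t.2.1, t.2.2))))
            = q (1, 0) * Real.log 2) := by
  constructor
  · intro p hp hpush hz
    have h111 : p (1,1,1) = 0 := hz 1
    have hm : p (0,1,0) + p (1,1,0) = q (1,0) := by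
      have h := congrFun hpush (1,0)
      simp only [pushF, Fintype.sum_prod_type, sum_zmod2', Prod.mk.injEq] at h
      norm_num at h
      linarith
    rw [condMIF_push_eval p, h111, ← hm]
    have hz2 : (p (0,1,1) + 0) * Real.log (p (0,1,1) + 0)
        - p (0,1,1) * Real.log (p (0,1,1)) - 0 * Real.log 0 = 0 := by
      simp
    rw [hz2, add_zero]
    exact merge_le' _ _ (hp.1 _) (hp.1 _)
  · refine ⟨fun t => if t.2 = ((1:ZMod 2),(0:ZMod 2)) then q (1,0)/2
      else if t.1 = 0 then q t.2 else 0, ?_, ?_, ?_, ?_⟩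
    · constructor
      · intro a
        dsimp only
        split
        · linarith [hq.1 (1,0)]
        · split
          · exact hq.1 _
          · exact le_refl 0
      · have hq1 := hq.2
        simp only [Fintype.sum_prod_type, sum_zmod2'] at hq1
        norm_num at hq1
        simp only [Fintype.sum_prod_type, sum_zmod2', Prod.mk.injEq]
        norm_num
        linarith
    · funext w
      rcases w with ⟨s1, s2⟩
      fin_cases s1 <;> fin_cases s2 <;>
        · simp only [pushF, Fintype.sum_prod_type, sum_zmod2', Prod.mk.injEq]
          norm_num
          simp (config := {decide := true})
          rfl
    · intro s₁
      dsimp only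
      have hfalse : ((s₁, (1:ZMod 2)) = ((1:ZMod 2),(0:ZMod 2))) = False := by
        simp [Prod.ext_iff]
      simp [hfalse]
    · rw [condMIF_push_eval]
      norm_num [Prod.ext_iff]
      have := merge_eq' (q (1,0)/2) (by linarith [hq.1 (1,0)])
      have hhalf : q (1,0)/2 + q (1,0)/2 = q (1,0) := by ring
      rw [hhalf] at this
      linarith
end

section
/- Let A and Z be nonempty finite types, n ≥ 1, let W : A → (Z → ℝ) be a channel (for each a, W(·|a) is a PMF on Z), and let Q₀ be a PMF on Z with Q₀(z) > 0 for all z. Let p be a joint PMF on (Fin n → A) × (Fin n → Z) (the joint law of (A₁,…,Aₙ,Z₁,…,Zₙ)) satisfying the memoryless property p(aⁿ, zⁿ) = p_{Aⁿ}(aⁿ)·∏_{i=1}^n W(zᵢ|aᵢ), where p_{Aⁿ} is the marginal on Fin n → A. Then I((A₁,…,Aₙ) ; (Z₁,…,Zₙ)) = ∑_{i=1}^n I(Aᵢ ; Zᵢ) + ∑_{i=1}^n D(p_{Zᵢ} ‖ Q₀) − D(p_{Zⁿ} ‖ Q₀^{⊗n}), where p_{Zᵢ} and p_{Zⁿ}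 are the corresponding marginals of p and Q₀^{⊗n}(zⁿ) = ∏ᵢ Q₀(zᵢ). In particular, if D(p_{Zⁿ} ‖ Q₀^{⊗n}) ≤ δ then I((A₁,…,Aₙ) ; (Z₁,…,Zₙ)) ≥ ∑_{i=1}^n I(Aᵢ ; Zᵢ) − δ. [Single-letterization step established in the converse proof of Theorem 1 of the paper, equations (58)–(66).] -/
open scoped BigOperators

set_option linter.unusedVariables false
set_option linter.unusedSectionVars false
set_option maxHeartbeats 1000000

namespace SL

variable {X B C : Type*} [Fintype X] [Fintype B] [Fintype C] [DecidableEq B] [DecidableEq C]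

lemma pushF_nonneg (p : X → ℝ) (hp : ∀ x, 0 ≤ p x) (f : X → B) (b : B) : 0 ≤ pushF p f b :=
  Finset.sum_nonneg fun x _ => by split <;> simp [hp x]

lemma sum_push (p : X → ℝ) (f : X → B) (g : B → ℝ) :
    ∑ b, pushF p f b * g b = ∑ x, p x * g (f x) := by
  simp only [pushF, Finset.sum_mul, ite_mul, zero_mul]
  rw [Finset.sum_comm]
  simp

lemma pushF_sum (p : X → ℝ) (f : X → B) : ∑ b, pushF p f b = ∑ x, p x := by
  have := sum_push p f (fun _ => 1)
  simpa using this

lemma pushF_le (p : X → ℝ) (hp : ∀ x, 0 ≤ p x) (f : X → B) (x : X) :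
    p x ≤ pushF p f (f x) := by
  have h : p x = if f x = f x then p x else 0 := by simp
  rw [h]
  exact Finset.single_le_sum (f := fun a => if f a = f x then p a else 0)
    (fun a _ => by split <;> simp [hp a]) (Finset.mem_univ x)

lemma pushF_comp (p : X → ℝ) (f : X → B) (g : B → C) :
    pushF (pushF p f) g = pushF p (g ∘ f) := by
  funext c
  simp only [pushF, Function.comp]
  have : ∀ b : B, (if g b = c then ∑ a, if f a = b then p a else 0 else 0)
      = ∑ a, if f a = b ∧ g b = c then p a else 0 := by
    intro b; split
    · congr 1; funext a; simp_all
    · rw [Finset.sum_eq_zero]; intro a _; simp_all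
  simp only [this]
  rw [Finset.sum_comm]
  congr 1; funext a
  by_cases h : g (f a) = c
  · rw [Finset.sum_eq_single (f a)]
    · simp [h]
    · intro b _ hb
      rw [if_neg]; rintro ⟨h1, _⟩; exact hb h1.symm
    · simp
  · rw [Finset.sum_eq_zero, if_neg h]
    intro b _
    by_cases hb : f a = b
    · subst hb; simp [h]
    · simp [hb]

lemma entF_push (p : X → ℝ) (f : X → B) :
    entF (pushF p f) = -∑ x, p x * Real.log (pushF p f (f x)) := by
  rw [entF]
  congr 1
  exact sum_push p f (fun b => Real.log (pushF p f b))

lemma klDivF_push (p : X → ℝ) (f : X → B) (Q : B → ℝ) :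
    klDivF (pushF p f) Q = ∑ x, p x * Real.log (pushF p f (f x) / Q (f x)) :=
  sum_push p f (fun b => Real.log (pushF p f b / Q b))

lemma sum_pi_ite {n : ℕ} {Z : Type*} [Fintype Z] [DecidableEq Z] (g : Fin n → Z → ℝ)
    (hg : ∀ j, ∑ z, g j z = 1) (i : Fin n) (z : Z) :
    ∑ zf : Fin n → Z, (if zf i = z then ∏ j, g j (zf j) else 0) = g i z := by
  classical
  set F : Fin n → Z → ℝ := fun j y => if j = i then (if y = z then g j y else 0) else g j y
    with hF
  have h1 : ∀ zf : Fin n → Z, (if zf i = z then ∏ j, g j (zf j) else 0)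
      = ∏ j, F j (zf j) := by
    intro zf
    simp only [hF]
    by_cases h : zf i = z
    · rw [if_pos h]
      apply Finset.prod_congr rfl
      intro j _
      by_cases hj : j = i
      · subst hj; simp [h]
      · simp [hj]
    · rw [if_neg h]
      rw [eq_comm]
      apply Finset.prod_eq_zero (Finset.mem_univ i)
      simp [h]
  calc ∑ zf : Fin n → Z, (if zf i = z then ∏ j, g j (zf j) else 0)
      = ∑ zf : Fin n → Z, ∏ j, F j (zf j) := Finset.sum_congr rfl fun zf _ => h1 zf
    _ = ∏ j, ∑ y, F j y := (Fintype.prod_sum F).symm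
    _ = g i z := by
        rw [Finset.prod_eq_single i]
        · simp [hF]
        · intro j _ hj
          simp [hF, hj, hg j]
        · simp

lemma klDivF_nonneg {A : Type*} [Fintype A] (P Q : A → ℝ) (hP : IsPMF P) (hQ : IsPMF Q)
    (hQpos : ∀ a, 0 < Q a) : 0 ≤ klDivF P Q := by
  have key : ∀ a, P a - Q a ≤ P a * Real.log (P a / Q a) := by
    intro a
    rcases eq_or_lt_of_le (hP.1 a) with h | h
    · rw [← h]; simp; linarith [(hQpos a).le]
    · have h2 : Real.log (Q a / P a) ≤ Q a / P a - 1 :=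
        Real.log_le_sub_one_of_pos (div_pos (hQpos a) h)
      have h3 : Real.log (Q a / P a) = - Real.log (P a / Q a) := by
        rw [← Real.log_inv]; congr 1; field_simp
      rw [h3] at h2
      have := mul_le_mul_of_nonneg_left h2 h.le
      have h4 : P a * (Q a / P a - 1) = Q a - P a := by field_simp
      rw [h4] at this
      linarith
  calc (0:ℝ) = ∑ a, (P a - Q a) := by rw [Finset.sum_sub_distrib, hP.2, hQ.2]; ring
  _ ≤ _ := Finset.sum_le_sum fun a _ => key a

lemma comb3 (f g h : X → ℝ) :
    (-∑ x, f x) + (-∑ x, g x) - (-∑ x, h x) = ∑ x, (h x - f x - g x) := by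
  rw [Finset.sum_sub_distrib, Finset.sum_sub_distrib]; ring

end SL

/-- Single-letterization identity from the converse proof of Theorem 1 (equations (58)–(66)):
for a memoryless channel `W` and a joint law `p` of `(Aⁿ, Zⁿ)` with
`p(aⁿ,zⁿ) = p_{Aⁿ}(aⁿ)·∏ᵢ W(zᵢ|aᵢ)`,
`I(Aⁿ;Zⁿ) = ∑ᵢ I(Aᵢ;Zᵢ) + ∑ᵢ D(p_{Zᵢ}‖Q₀) − D(p_{Zⁿ}‖Q₀^{⊗n})`; in particular, if
`D(p_{Zⁿ}‖Q₀^{⊗n}) ≤ δ` then `I(Aⁿ;Zⁿ) ≥ ∑ᵢ I(Aᵢ;Zᵢ) − δ`. -/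
theorem single_letterization {A Z : Type*} [Fintype A] [Fintype Z]
    [Nonempty A] [Nonempty Z] [DecidableEq A] [DecidableEq Z]
    (n : ℕ) (hn : 1 ≤ n)
    (W : A → Z → ℝ) (hW : ∀ a, IsPMF (W a))
    (Q₀ : Z → ℝ) (hQ₀ : IsPMF Q₀) (hQ₀pos : ∀ z, 0 < Q₀ z)
    (p : (Fin n → A) × (Fin n → Z) → ℝ) (hp : IsPMF p)
    (hmem : ∀ af zf, p (af, zf) = pushF p Prod.fst af * ∏ i, W (af i) (zf i)) :
    mutInfoF p
        = (∑ i : Fin n, mutInfoF (pushF p (fun t => (t.1 i, t.2 i))))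
            + (∑ i : Fin n, klDivF (pushF p (fun t => t.2 i)) Q₀)
            - klDivF (pushF p Prod.snd) (fun zf => ∏ i, Q₀ (zf i))
      ∧ ∀ δ : ℝ, klDivF (pushF p Prod.snd) (fun zf => ∏ i, Q₀ (zf i)) ≤ δ →
          (∑ i : Fin n, mutInfoF (pushF p (fun t => (t.1 i, t.2 i)))) - δ ≤ mutInfoF p := by
  classical
  have hpnn := hp.1
  -- marginal of fst
  have hpA : ∀ af, pushF p Prod.fst af = ∑ zf, p (af, zf) := by
    intro af
    simp only [pushF, Fintype.sum_prod_type]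
    rw [Finset.sum_eq_single af]
    · simp
    · intro b _ hb; rw [Finset.sum_eq_zero]; intro zf _; simp [hb]
    · simp
  -- single-letter joint marginal factorizes
  have hL2 : ∀ (i : Fin n) (a : A) (z : Z),
      pushF p (fun t => (t.1 i, t.2 i)) (a, z)
        = pushF p (fun t => t.1 i) a * W a z := by
    intro i a z
    have step1 : pushF p (fun t => (t.1 i, t.2 i)) (a, z)
        = ∑ af : Fin n → A, (if af i = a then pushF p Prod.fst af * W (af i) z else 0) := by
      have expand : pushF p (fun t => (t.1 i, t.2 i)) (a, z)
          = ∑ af : Fin n → A, ∑ zf : Fin n → Z,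
              (if af i = a ∧ zf i = z then p (af, zf) else 0) := by
        simp only [pushF, Fintype.sum_prod_type, Prod.mk.injEq]
      rw [expand]
      apply Finset.sum_congr rfl
      intro af _
      by_cases ha : af i = a
      · rw [if_pos ha]
        have hin : ∀ zf : Fin n → Z, (if af i = a ∧ zf i = z then p (af, zf) else 0)
            = pushF p Prod.fst af * (if zf i = z then ∏ j, W (af j) (zf j) else 0) := by
          intro zf
          by_cases hz : zf i = z
          · rw [if_pos ⟨ha, hz⟩, if_pos hz, hmem]
          · rw [if_neg (by tauto), if_neg hz, mul_zero]
        rw [Finset.sum_congr rfl fun zf _ => hin zf, ← Finset.mul_sum,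
          SL.sum_pi_ite (fun j => W (af j)) (fun j => (hW (af j)).2) i z]
      · rw [Finset.sum_eq_zero, if_neg ha]
        intro zf _
        rw [if_neg (by tauto)]
    have step2 : ∑ af : Fin n → A, (if af i = a then pushF p Prod.fst af * W (af i) z else 0)
        = (∑ af : Fin n → A, (if af i = a then pushF p Prod.fst af else 0)) * W a z := by
      rw [Finset.sum_mul]
      apply Finset.sum_congr rfl
      intro af _
      by_cases ha : af i = a
      · rw [if_pos ha, if_pos ha, ha]
      · rw [if_neg ha, if_neg ha, zero_mul]
    have step3 : pushF p (fun t => t.1 i) a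
        = ∑ af : Fin n → A, (if af i = a then pushF p Prod.fst af else 0) := by
      have expand2 : pushF p (fun t => t.1 i) a
          = ∑ af : Fin n → A, ∑ zf : Fin n → Z, (if af i = a then p (af, zf) else 0) := by
        simp only [pushF, Fintype.sum_prod_type]
      rw [expand2]
      apply Finset.sum_congr rfl
      intro af _
      by_cases ha : af i = a
      · simp only [if_pos ha]
        exact (hpA af).symm
      · simp only [if_neg ha, Finset.sum_const_zero]
    rw [step1, step2, ← step3]
  -- marginal consistency of single-letter marginals
  have hcompA : ∀ i : Fin n, pushF (pushF p (fun t => (t.1 i, t.2 i))) Prod.fst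
      = pushF p (fun t => t.1 i) :=
    fun i => SL.pushF_comp p (fun t => (t.1 i, t.2 i)) Prod.fst
  have hcompZ : ∀ i : Fin n, pushF (pushF p (fun t => (t.1 i, t.2 i))) Prod.snd
      = pushF p (fun t => t.2 i) :=
    fun i => SL.pushF_comp p (fun t => (t.1 i, t.2 i)) Prod.snd
  -- express all quantities as sums over the full space
  have hMI : mutInfoF p = ∑ x, p x * (Real.log (p x)
      - Real.log (pushF p Prod.fst x.1) - Real.log (pushF p Prod.snd x.2)) := by
    rw [mutInfoF, SL.entF_push, SL.entF_push, entF, SL.comb3]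
    apply Finset.sum_congr rfl
    intro x _
    ring
  have hMIi : ∀ i : Fin n, mutInfoF (pushF p (fun t => (t.1 i, t.2 i)))
      = ∑ x, p x * (Real.log (pushF p (fun t => (t.1 i, t.2 i)) (x.1 i, x.2 i))
          - Real.log (pushF p (fun t => t.1 i) (x.1 i))
          - Real.log (pushF p (fun t => t.2 i) (x.2 i))) := by
    intro i
    rw [mutInfoF, hcompA i, hcompZ i, SL.entF_push, SL.entF_push,
      SL.entF_push p (fun t => (t.1 i, t.2 i)), SL.comb3]
    apply Finset.sum_congr rfl
    intro x _
    ring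
  have hKLi : ∀ i : Fin n, klDivF (pushF p (fun t => t.2 i)) Q₀
      = ∑ x, p x * Real.log (pushF p (fun t => t.2 i) (x.2 i) / Q₀ (x.2 i)) :=
    fun i => SL.klDivF_push p (fun t => t.2 i) Q₀
  have hKLn : klDivF (pushF p Prod.snd) (fun zf => ∏ i, Q₀ (zf i))
      = ∑ x, p x * Real.log (pushF p Prod.snd x.2 / ∏ i, Q₀ (x.2 i)) :=
    SL.klDivF_push p Prod.snd (fun zf => ∏ i, Q₀ (zf i))
  -- main identity
  have main : mutInfoF p
      = (∑ i : Fin n, mutInfoF (pushF p (fun t => (t.1 i, t.2 i))))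
          + (∑ i : Fin n, klDivF (pushF p (fun t => t.2 i)) Q₀)
          - klDivF (pushF p Prod.snd) (fun zf => ∏ i, Q₀ (zf i)) := by
    rw [hMI, hKLn]
    rw [Finset.sum_congr rfl fun i _ => hMIi i, Finset.sum_congr rfl fun i _ => hKLi i]
    rw [Finset.sum_comm, Finset.sum_comm (s := Finset.univ) (t := Finset.univ)
      (f := fun i x => p x * Real.log (pushF p (fun t => t.2 i) (x.2 i) / Q₀ (x.2 i)))]
    rw [← Finset.sum_add_distrib, ← Finset.sum_sub_distrib]
    apply Finset.sum_congr rfl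
    intro x _
    by_cases hpx : p x = 0
    · simp [hpx]
    have hpxpos : 0 < p x := lt_of_le_of_ne (hpnn x) (Ne.symm hpx)
    have hApos : 0 < pushF p Prod.fst x.1 :=
      lt_of_lt_of_le hpxpos (SL.pushF_le p hpnn Prod.fst x)
    have hZpos : 0 < pushF p Prod.snd x.2 :=
      lt_of_lt_of_le hpxpos (SL.pushF_le p hpnn Prod.snd x)
    have hAipos : ∀ i : Fin n, 0 < pushF p (fun t => t.1 i) (x.1 i) :=
      fun i => lt_of_lt_of_le hpxpos (SL.pushF_le p hpnn (fun t => t.1 i) x)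
    have hZipos : ∀ i : Fin n, 0 < pushF p (fun t => t.2 i) (x.2 i) :=
      fun i => lt_of_lt_of_le hpxpos (SL.pushF_le p hpnn (fun t => t.2 i) x)
    have hpx' : p (x.1, x.2) ≠ 0 := by rwa [Prod.mk.eta]
    have hprodW : (∏ i, W (x.1 i) (x.2 i)) ≠ 0 := by
      intro h
      apply hpx'
      rw [hmem x.1 x.2, h, mul_zero]
    have hWne : ∀ i : Fin n, W (x.1 i) (x.2 i) ≠ 0 := by
      intro i
      exact Finset.prod_ne_zero_iff.mp hprodW i (Finset.mem_univ i)
    have hQprod : (∏ i, Q₀ (x.2 i)) ≠ 0 :=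
      ne_of_gt (Finset.prod_pos fun i _ => hQ₀pos (x.2 i))
    -- log expansions
    have hlogp : Real.log (p x)
        = Real.log (pushF p Prod.fst x.1) + ∑ i, Real.log (W (x.1 i) (x.2 i)) := by
      conv_lhs => rw [show p x = p (x.1, x.2) from by rw [Prod.mk.eta]]
      rw [hmem x.1 x.2, Real.log_mul (ne_of_gt hApos) hprodW,
        Real.log_prod fun i _ => hWne i]
    have hlogpi : ∀ i : Fin n,
        Real.log (pushF p (fun t => (t.1 i, t.2 i)) (x.1 i, x.2 i))
          = Real.log (pushF p (fun t => t.1 i) (x.1 i)) + Real.log (W (x.1 i) (x.2 i)) := by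
      intro i
      rw [hL2 i (x.1 i) (x.2 i), Real.log_mul (ne_of_gt (hAipos i)) (hWne i)]
    have hlogKn : Real.log (pushF p Prod.snd x.2 / ∏ i, Q₀ (x.2 i))
        = Real.log (pushF p Prod.snd x.2) - ∑ i, Real.log (Q₀ (x.2 i)) := by
      rw [Real.log_div (ne_of_gt hZpos) hQprod, Real.log_prod fun i _ => ne_of_gt (hQ₀pos (x.2 i))]
    have hlogKi : ∀ i : Fin n,
        Real.log (pushF p (fun t => t.2 i) (x.2 i) / Q₀ (x.2 i))
          = Real.log (pushF p (fun t => t.2 i) (x.2 i)) - Real.log (Q₀ (x.2 i)) :=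
      fun i => Real.log_div (ne_of_gt (hZipos i)) (ne_of_gt (hQ₀pos (x.2 i)))
    rw [← Finset.mul_sum, ← Finset.mul_sum, ← mul_add, ← mul_sub]
    congr 1
    simp only [hlogp, hlogKn, hlogpi, hlogKi]
    simp only [Finset.sum_sub_distrib, Finset.sum_add_distrib]
    ring
  refine ⟨main, ?_⟩
  intro δ hδ
  have hD : 0 ≤ ∑ i : Fin n, klDivF (pushF p (fun t => t.2 i)) Q₀ := by
    apply Finset.sum_nonneg
    intro i _
    apply SL.klDivF_nonneg _ _ _ hQ₀ hQ₀pos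
    constructor
    · exact SL.pushF_nonneg p hpnn _
    · rw [SL.pushF_sum, hp.2]
  linarith [main]
end
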